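/- Let Δ(t) = t + 2 + t⁻¹. Then D₁ = ℚ[s]/(s+2) is canonically isomorphic to ℚ, and under this identification the image of φ₁ : E₁^× → D₁^× = ℚ^× is exactly the subgroup (ℚ^×)² of squares; consequently the cokernel D₁^×/φ₁(E₁^×) is isomorphic to ℚ^×/(ℚ^×)², which is an infinite group (isomorphic to a direct sum of copies of ℤ/2ℤ indexed by {−1} together with the prime numbers). -/

import Mathlib

open LaurentPolynomial

set_option maxHeartbeats 1000000
set_option synthInstance.maxHeartbeats 400000

noncomputable section

/-- `Λ = ℚ[t,t⁻¹]`, the ring of Laurent polynomials over `ℚ`. -/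
abbrev Λ : Type := LaurentPolynomial ℚ

/-- The variable `t` of `Λ`. -/
def tΛ : Λ := T 1

/-- The involution `P(t) ↦ P(t⁻¹)` of `Λ`. -/
def lbar : Λ →+* Λ := (invert : Λ ≃ₐ[ℚ] Λ).toRingEquiv.toRingHom

/-- `P ∈ Λ` is symmetric if `P(t⁻¹) = P(t)`. -/
def SymmL (P : Λ) : Prop := lbar P = P

/-- The fraction field `ℚ(t)` of `Λ`. -/
abbrev KΛ : Type := FractionRing Λ

/-- The involution of `ℚ(t)` extending that of `Λ`. -/
def kbar : KΛ →+* KΛ :=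
  (IsFractionRing.ringEquivOfRingEquiv (A := Λ) (B := Λ) (K := KΛ) (L := KΛ)
    (invert : Λ ≃ₐ[ℚ] Λ).toRingEquiv).toRingHom

lemma kbar_algebraMap (P : Λ) : kbar (algebraMap Λ KΛ P) = algebraMap Λ KΛ (lbar P) := by
  simp [kbar, lbar]

/-- The image of `Λ` inside `ℚ(t)`, as a `Λ`-submodule of `ℚ(t)`. -/
def ΛinK : Submodule Λ KΛ := LinearMap.range (Algebra.linearMap Λ KΛ)

/-- The quotient `Λ`-module `ℚ(t)/Λ`. -/
abbrev QL : Type := KΛ ⧸ ΛinK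

/-- The class in `ℚ(t)/Λ` of an element of `ℚ(t)`. -/
abbrev QLmk : KΛ →ₗ[Λ] QL := ΛinK.mkQ

/-- The class of the fraction `P/Q` in `ℚ(t)/Λ`, for `P Q : Λ`. -/
def fracQ (P Q : Λ) : QL := QLmk (algebraMap Λ KΛ P / algebraMap Λ KΛ Q)

/-- The involution of `ℚ(t)/Λ` induced by `P(t) ↦ P(t⁻¹)`. -/
def qbar : QL → QL := fun x =>
  Quotient.liftOn x (fun a => QLmk (kbar a)) (by
    intro a b h
    obtain ⟨r, hr⟩ := (Submodule.quotientRel_def (p := ΛinK)).mp h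
    apply (Submodule.Quotient.eq _).2
    refine ⟨lbar r, ?_⟩
    rw [← map_sub, ← hr]
    exact (kbar_algebraMap _).symm)

lemma qbar_mk (a : KΛ) : qbar (QLmk a) = QLmk (kbar a) := rfl

/-- Evaluation of a Laurent polynomial at a nonzero rational number. -/
def evalL (q : ℚˣ) : Λ →ₐ[ℚ] ℚ :=
  AddMonoidAlgebra.lift ℚ ℚ ℤ ((Units.coeHom ℚ).comp (zpowersHom ℚˣ q))

/-- A hermitian form on a `Λ`-module `A`, with values in `ℚ(t)/Λ`:
it is `Λ`-linear in the first variable and conjugate-symmetric (hence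
semilinear with respect to the involution in the second variable). -/
structure HermForm (A : Type*) [AddCommGroup A] [Module Λ A] where
  bil : A → A → QL
  add_left : ∀ x y z : A, bil (x + y) z = bil x z + bil y z
  smul_left : ∀ (r : Λ) (x y : A), bil (r • x) y = r • bil x y
  conj_symm : ∀ x y : A, bil x y = qbar (bil y x)

/-- A hermitian form is non-degenerate if `φ(x,y) = 0` for all `y` implies `x = 0`. -/
def HermForm.Nondeg {A : Type*} [AddCommGroup A] [Module Λ A] (φ : HermForm A) : Prop :=
  ∀ x : A, (∀ y : A, φ.bil x y = 0) → x = 0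

/-- Two hermitian forms are isometric if they differ by a `Λ`-module automorphism. -/
def HermForm.Isometric {A : Type*} [AddCommGroup A] [Module Λ A]
    (φ₁ φ₂ : HermForm A) : Prop :=
  ∃ f : A ≃ₗ[Λ] A, ∀ x y : A, φ₂.bil x y = φ₁.bil (f x) (f y)

/-- The `ℚ`-algebra map `ℚ[s] → Λ` sending `s` to `t + t⁻¹`. -/
def θQ : Polynomial ℚ →ₐ[ℚ] Λ := Polynomial.aeval (T 1 + T (-1))

/-- `Eₙ = Λ/(Δⁿ)`. -/
abbrev En (Δ : Λ) (n : ℕ) : Type := Λ ⧸ (Ideal.span {Δ ^ n} : Ideal Λ)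

/-- `Dₙ = ℚ[s]/(Δ_sⁿ)`. -/
abbrev Dn (Δs : Polynomial ℚ) (n : ℕ) : Type :=
  Polynomial ℚ ⧸ (Ideal.span {Δs ^ n} : Ideal (Polynomial ℚ))

/-- The ring homomorphism `Dₙ → Eₙ` induced by `s ↦ t + t⁻¹`. -/
def ιDE (Δ : Λ) (Δs : Polynomial ℚ) (hθ : θQ Δs = Δ) (n : ℕ) : Dn Δs n →+* En Δ n :=
  Ideal.quotientMap (Ideal.span {Δ ^ n}) θQ.toRingHom (by
    rw [Ideal.span_le, Set.singleton_subset_iff, SetLike.mem_coe, Ideal.mem_comap]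
    have : θQ.toRingHom (Δs ^ n) = Δ ^ n := by rw [map_pow]; exact congrArg (· ^ n) hθ
    rw [this]
    exact Ideal.subset_span rfl)

/-- The involution of `Eₙ` induced by that of `Λ` (using that `Δ` is symmetric). -/
def barE (Δ : Λ) (hsym : lbar Δ = Δ) (n : ℕ) : En Δ n →+* En Δ n :=
  Ideal.quotientMap (Ideal.span {Δ ^ n}) lbar (by
    rw [Ideal.span_le, Set.singleton_subset_iff, SetLike.mem_coe, Ideal.mem_comap]
    have : lbar (Δ ^ n) = Δ ^ n := by rw [map_pow, hsym]
    rw [this]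
    exact Ideal.subset_span rfl)

/-- The image of `φₙ : Eₙˣ → Dₙˣ`, i.e. the subgroup of `Dₙˣ` of elements `d` such
that the image of `d` in `Eₙ` is of the form `R·R̄` for a unit `R` of `Eₙ`. -/
def normSub (Δ : Λ) (Δs : Polynomial ℚ) (hθ : θQ Δs = Δ) (hsym : lbar Δ = Δ) (n : ℕ) :
    Subgroup (Dn Δs n)ˣ where
  carrier := {d : (Dn Δs n)ˣ | ∃ R : (En Δ n)ˣ,
    ιDE Δ Δs hθ n (d : Dn Δs n) = (R : En Δ n) * barE Δ hsym n (R : En Δ n)}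
  one_mem' := ⟨1, by simp⟩
  mul_mem' := by
    rintro a b ⟨R, hR⟩ ⟨S, hS⟩
    refine ⟨R * S, ?_⟩
    rw [Units.val_mul, map_mul, hR, hS, Units.val_mul, map_mul]
    ring
  inv_mem' := by
    rintro a ⟨R, hR⟩
    refine ⟨R⁻¹, ?_⟩
    have hxu : ιDE Δ Δs hθ n ((a⁻¹ : (Dn Δs n)ˣ) : Dn Δs n)
        * ((R : En Δ n) * barE Δ hsym n (R : En Δ n)) = 1 := by
      rw [← hR, ← map_mul, ← Units.val_mul, inv_mul_cancel, Units.val_one, map_one]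
    have h1 : ((R⁻¹ : (En Δ n)ˣ) : En Δ n) * (R : En Δ n) = 1 := by
      rw [← Units.val_mul, inv_mul_cancel, Units.val_one]
    have hyu : (((R⁻¹ : (En Δ n)ˣ) : En Δ n) * barE Δ hsym n ((R⁻¹ : (En Δ n)ˣ) : En Δ n))
        * ((R : En Δ n) * barE Δ hsym n (R : En Δ n)) = 1 := by
      calc (((R⁻¹ : (En Δ n)ˣ) : En Δ n) * barE Δ hsym n ((R⁻¹ : (En Δ n)ˣ) : En Δ n))
            * ((R : En Δ n) * barE Δ hsym n (R : En Δ n))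
          = (((R⁻¹ : (En Δ n)ˣ) : En Δ n) * (R : En Δ n))
            * (barE Δ hsym n ((R⁻¹ : (En Δ n)ˣ) : En Δ n) * barE Δ hsym n (R : En Δ n)) := by
            ring
        _ = 1 := by rw [h1, ← map_mul, h1, map_one, one_mul]
    calc ιDE Δ Δs hθ n ((a⁻¹ : (Dn Δs n)ˣ) : Dn Δs n)
        = ιDE Δ Δs hθ n ((a⁻¹ : (Dn Δs n)ˣ) : Dn Δs n)
          * (((R : En Δ n) * barE Δ hsym n (R : En Δ n))
          * (((R⁻¹ : (En Δ n)ˣ) : En Δ n) * barE Δ hsym n ((R⁻¹ : (En Δ n)ˣ) : En Δ n))) := by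
          rw [show ((R : En Δ n) * barE Δ hsym n (R : En Δ n))
            * (((R⁻¹ : (En Δ n)ˣ) : En Δ n) * barE Δ hsym n ((R⁻¹ : (En Δ n)ˣ) : En Δ n)) = 1 by
              rw [mul_comm]; exact hyu]
          rw [mul_one]
      _ = (ιDE Δ Δs hθ n ((a⁻¹ : (Dn Δs n)ˣ) : Dn Δs n)
          * ((R : En Δ n) * barE Δ hsym n (R : En Δ n)))
          * (((R⁻¹ : (En Δ n)ˣ) : En Δ n) * barE Δ hsym n ((R⁻¹ : (En Δ n)ˣ) : En Δ n)) := by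
          ring
      _ = ((R⁻¹ : (En Δ n)ˣ) : En Δ n) * barE Δ hsym n ((R⁻¹ : (En Δ n)ˣ) : En Δ n) := by
          rw [hxu, one_mul]

instance normSub_normal (Δ : Λ) (Δs : Polynomial ℚ) (hθ : θQ Δs = Δ) (hsym : lbar Δ = Δ)
    (n : ℕ) : (normSub Δ Δs hθ hsym n).Normal :=
  ⟨fun a h g => by rwa [mul_comm g a, mul_assoc, mul_inv_cancel, mul_one]⟩

/-- The reduction map `Dₙ → D₁`. -/
def redD (Δs : Polynomial ℚ) (n : ℕ) (hn : 1 ≤ n) : Dn Δs n →+* Dn Δs 1 :=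
  Ideal.Quotient.factor (by
    rw [Ideal.span_le, Set.singleton_subset_iff, SetLike.mem_coe, Ideal.mem_span_singleton,
      pow_one]
    exact dvd_pow_self Δs (by omega))

/-- `Δ = t + 2 + t⁻¹`. -/
def Δ4 : Λ := tΛ + 2 + T (-1)

/-- `Δ_s = s + 2`. -/
def Δs4 : Polynomial ℚ := Polynomial.X - Polynomial.C (-2)

lemma hθ4 : θQ Δs4 = Δ4 := by
  simp only [Δs4, θQ, Δ4, map_sub, Polynomial.aeval_X, Polynomial.aeval_C, tΛ]
  have : (algebraMap ℚ Λ) (-2 : ℚ) = (-2 : Λ) := by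
    rw [map_neg, map_ofNat]
  rw [this]
  ring

lemma hsym4 : lbar Δ4 = Δ4 := by
  have h2 : lbar (2 : Λ) = 2 := map_ofNat _ 2
  simp only [Δ4, tΛ, map_add, h2]
  have hT : ∀ k : ℤ, lbar (T k : Λ) = T (-k) := fun k => by
    simp [lbar, LaurentPolynomial.invert_T]
  rw [hT 1, hT (-1)]
  ring_nf

/-- The canonical map `D₁ = ℚ[s]/(s+2) → ℚ`, evaluation at `s = -2`. -/
def evD1 : Dn Δs4 1 →+* ℚ :=
  Ideal.Quotient.lift _ (Polynomial.evalRingHom (-2)) (by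
    intro a ha
    rw [Ideal.mem_span_singleton] at ha
    obtain ⟨c, rfl⟩ := ha
    simp [Δs4])

lemma evD1_mk (p : Polynomial ℚ) :
    evD1 (Ideal.Quotient.mk (Ideal.span {Δs4 ^ 1}) p) = p.eval (-2) :=
  Ideal.Quotient.lift_mk _ _ _

lemma evD1_bij : Function.Bijective evD1 := by
  constructor
  · rw [injective_iff_map_eq_zero]
    intro a ha
    obtain ⟨p, rfl⟩ := Ideal.Quotient.mk_surjective a
    rw [evD1_mk] at ha
    rw [Ideal.Quotient.eq_zero_iff_mem, Ideal.mem_span_singleton, pow_one, Δs4]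
    exact (Polynomial.dvd_iff_isRoot (a := (-2 : ℚ))).2 ha
  · intro x
    exact ⟨Ideal.Quotient.mk _ (Polynomial.C x), by rw [evD1_mk]; simp⟩

lemma evalL_T (q : ℚˣ) (k : ℤ) : evalL q (T k) = ((q ^ k : ℚˣ) : ℚ) := by
  show (AddMonoidAlgebra.lift ℚ ℚ ℤ) ((Units.coeHom ℚ).comp (zpowersHom ℚˣ q))
      (AddMonoidAlgebra.single k 1) = _
  rw [AddMonoidAlgebra.lift_single]
  simp

lemma lbar_C (b : ℚ) : lbar (LaurentPolynomial.C b) = LaurentPolynomial.C b := by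
  simp [lbar, LaurentPolynomial.invert_C]

lemma evalm_Δ4 : evalL (-1 : ℚˣ) Δ4 = 0 := by
  have h2 : evalL (-1 : ℚˣ) (2 : Λ) = 2 := map_ofNat _ 2
  rw [Δ4, tΛ, map_add, map_add, h2, evalL_T, evalL_T]
  norm_num

lemma evalm_comp_bar :
    (evalL (-1 : ℚˣ)).toRingHom.comp lbar = (evalL (-1 : ℚˣ)).toRingHom := by
  apply AddMonoidAlgebra.ringHom_ext
  · intro b
    have h : (AddMonoidAlgebra.single (0:ℤ) b : Λ) = LaurentPolynomial.C b := rfl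
    have hl : lbar (LaurentPolynomial.C b) = LaurentPolynomial.C b := by
      simp [lbar, LaurentPolynomial.invert_C]
    rw [RingHom.comp_apply, h, hl]
  · intro a
    have h : (AddMonoidAlgebra.single (a:ℤ) (1:ℚ) : Λ) = T a := rfl
    have hb : lbar (T a) = T (-a) := by simp [lbar]
    rw [RingHom.comp_apply, h, hb]
    show evalL (-1:ℚˣ) (T (-a)) = evalL (-1:ℚˣ) (T a)
    rw [evalL_T, evalL_T, zpow_neg, ← inv_zpow, inv_neg, inv_one]

lemma evalm_bar (P : Λ) : evalL (-1 : ℚˣ) (lbar P) = evalL (-1 : ℚˣ) P :=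
  RingHom.congr_fun evalm_comp_bar P

def evE : En Δ4 1 →+* ℚ :=
  Ideal.Quotient.lift _ (evalL (-1 : ℚˣ)).toRingHom (by
    intro a ha
    rw [Ideal.mem_span_singleton] at ha
    obtain ⟨c, rfl⟩ := ha
    rw [map_mul]
    simp [pow_one, evalm_Δ4])

lemma evE_mk (P : Λ) :
    evE (Ideal.Quotient.mk (Ideal.span {Δ4 ^ 1}) P) = evalL (-1 : ℚˣ) P :=
  Ideal.Quotient.lift_mk _ _ _

lemma evE_bar (e : En Δ4 1) : evE (barE Δ4 hsym4 1 e) = evE e := by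
  obtain ⟨P, rfl⟩ := Ideal.Quotient.mk_surjective e
  rw [barE, Ideal.quotientMap_mk, evE_mk, evE_mk]
  exact evalm_bar P

lemma evE_ιDE (d : Dn Δs4 1) : evE (ιDE Δ4 Δs4 hθ4 1 d) = evD1 d := by
  obtain ⟨p, rfl⟩ := Ideal.Quotient.mk_surjective d
  rw [ιDE, Ideal.quotientMap_mk, evE_mk, evD1_mk]
  show evalL (-1:ℚˣ) (θQ p) = _
  rw [θQ, ← Polynomial.aeval_algHom_apply]
  have h : evalL (-1:ℚˣ) (T 1 + T (-1)) = -2 := by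
    rw [map_add, evalL_T, evalL_T]; norm_num
  rw [h]
  exact congrFun (Polynomial.coe_aeval_eq_eval (-2 : ℚ)) p

lemma evE_unit_ne (R : (En Δ4 1)ˣ) : evE (R : En Δ4 1) ≠ 0 := by
  intro h
  have : evE (R : En Δ4 1) * evE ((R⁻¹ : (En Δ4 1)ˣ) : En Δ4 1) = 1 := by
    rw [← map_mul, ← Units.val_mul, mul_inv_cancel, Units.val_one, map_one]
  rw [h, zero_mul] at this
  exact zero_ne_one this

lemma part2 (d : (Dn Δs4 1)ˣ) :
    d ∈ normSub Δ4 Δs4 hθ4 hsym4 1 ↔ ∃ q : ℚ, q ≠ 0 ∧ evD1 (d : Dn Δs4 1) = q ^ 2 := by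
  constructor
  · rintro ⟨R, hR⟩
    refine ⟨evE (R : En Δ4 1), evE_unit_ne R, ?_⟩
    rw [← evE_ιDE, hR, map_mul, evE_bar, sq]
  · rintro ⟨q, hq, hval⟩
    have hd : (d : Dn Δs4 1) = Ideal.Quotient.mk _ (Polynomial.C (q^2)) := by
      apply evD1_bij.1
      rw [hval, evD1_mk]; simp
    have hu : IsUnit (Ideal.Quotient.mk (Ideal.span {Δ4 ^ 1}) (LaurentPolynomial.C q)) := by
      apply IsUnit.of_mul_eq_one (Ideal.Quotient.mk _ (LaurentPolynomial.C q⁻¹))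
      rw [← map_mul, ← map_mul, mul_inv_cancel₀ hq, map_one, map_one]
    refine ⟨hu.unit, ?_⟩
    rw [hd, ιDE, Ideal.quotientMap_mk, hu.unit_spec, barE, Ideal.quotientMap_mk]
    have hlb : lbar (LaurentPolynomial.C q) = LaurentPolynomial.C q := by simp [lbar]
    rw [hlb, ← map_mul]
    congr 1
    show θQ (Polynomial.C (q^2)) = _
    rw [θQ, Polynomial.aeval_C, ← map_mul, ← LaurentPolynomial.C_eq_algebraMap, sq]
def eD : Dn Δs4 1 ≃+* ℚ := RingEquiv.ofBijective evD1 evD1_bij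

def uD : (Dn Δs4 1)ˣ ≃* ℚˣ := Units.mapEquiv eD.toMulEquiv

lemma uD_val (d : (Dn Δs4 1)ˣ) : ((uD d : ℚˣ) : ℚ) = evD1 (d : Dn Δs4 1) := rfl

lemma map_normSub : Subgroup.map uD.toMonoidHom (normSub Δ4 Δs4 hθ4 hsym4 1)
    = (powMonoidHom 2 : ℚˣ →* ℚˣ).range := by
  ext u
  simp only [Subgroup.mem_map, MonoidHom.mem_range, powMonoidHom_apply]
  constructor
  · rintro ⟨d, hd, rfl⟩
    obtain ⟨q, hq, hval⟩ := (part2 d).1 hd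
    refine ⟨Units.mk0 q hq, Units.ext ?_⟩
    show ((Units.mk0 q hq : ℚˣ) : ℚ) ^ 2 = _
    rw [Units.val_mk0]
    show _ = ((uD d : ℚˣ) : ℚ)
    rw [uD_val, hval]
  · rintro ⟨v, rfl⟩
    refine ⟨uD.symm (v ^ 2), ?_, uD.apply_symm_apply _⟩
    apply (part2 _).2
    refine ⟨(v : ℚ), Units.ne_zero v, ?_⟩
    rw [← uD_val, uD.apply_symm_apply]
    show ((v ^ 2 : ℚˣ) : ℚ) = _
    rw [Units.val_pow_eq_pow_val]

def part3equiv : ((Dn Δs4 1)ˣ ⧸ normSub Δ4 Δs4 hθ4 hsym4 1) ≃*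
    (ℚˣ ⧸ (powMonoidHom 2 : ℚˣ →* ℚˣ).range) :=
  QuotientGroup.congr _ _ uD map_normSub
/-- Target type for the classification of `ℚˣ` mod squares. -/
abbrev Tgt : Type := (Unit ⊕ {p : ℕ // p.Prime}) →₀ ZMod 2

def sgn2 (q : ℚˣ) : ZMod 2 := if (q : ℚ) < 0 then 1 else 0

lemma sgn2_mul (q r : ℚˣ) : sgn2 (q * r) = sgn2 q + sgn2 r := by
  have hq : (q : ℚ) ≠ 0 := Units.ne_zero q
  have hr : (r : ℚ) ≠ 0 := Units.ne_zero r
  have hqr : ((q * r : ℚˣ) : ℚ) = (q : ℚ) * (r : ℚ) := Units.val_mul q r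
  rcases hq.lt_or_gt with h1 | h1 <;> rcases hr.lt_or_gt with h2 | h2
  · have h3 : ¬ ((q : ℚ) * (r : ℚ) < 0) := not_lt.2 (mul_pos_of_neg_of_neg h1 h2).le
    simp only [sgn2, hqr, if_pos h1, if_pos h2, if_neg h3]; decide
  · have h3 : (q : ℚ) * (r : ℚ) < 0 := mul_neg_of_neg_of_pos h1 h2
    simp only [sgn2, hqr, if_pos h1, if_neg (not_lt.2 h2.le), if_pos h3]; decide
  · have h3 : (q : ℚ) * (r : ℚ) < 0 := mul_neg_of_pos_of_neg h1 h2
    simp only [sgn2, hqr, if_neg (not_lt.2 h1.le), if_pos h2, if_pos h3]; decide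
  · have h3 : ¬ ((q : ℚ) * (r : ℚ) < 0) := not_lt.2 (mul_pos h1 h2).le
    simp only [sgn2, hqr, if_neg (not_lt.2 h1.le), if_neg (not_lt.2 h2.le), if_neg h3]; decide

def Nq (q : ℚˣ) : ℕ := (q : ℚ).num.natAbs * (q : ℚ).den

lemma Nq_ne_zero (q : ℚˣ) : Nq q ≠ 0 :=
  mul_ne_zero (Int.natAbs_ne_zero.2 (Rat.num_ne_zero.2 (Units.ne_zero q))) (q : ℚ).den_nz

lemma fact_key (p : ℕ) (hp : p.Prime) (q : ℚˣ) :
    (((Nq q).factorization p : ℕ) : ZMod 2) = ((padicValRat p (q : ℚ) : ℤ) : ZMod 2) := by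
  haveI : Fact p.Prime := ⟨hp⟩
  have hnum : (q : ℚ).num.natAbs ≠ 0 := Int.natAbs_ne_zero.2 (Rat.num_ne_zero.2 (Units.ne_zero q))
  have hden : (q : ℚ).den ≠ 0 := (q : ℚ).den_nz
  have cast_key : ∀ a b : ℕ, ((a + b : ℕ) : ZMod 2) = (((a : ℤ) - (b : ℤ) : ℤ) : ZMod 2) := by
    have hneg : ∀ x : ZMod 2, -x = x := by decide
    intro a b
    push_cast
    rw [sub_eq_add_neg, hneg]
  rw [Nq, Nat.factorization_mul hnum hden, Finsupp.add_apply,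
    Nat.factorization_def _ hp, Nat.factorization_def _ hp, padicValRat_def, padicValInt,
    cast_key]
def vq (q : ℚˣ) : ℕ →₀ ZMod 2 :=
  (Nq q).factorization.mapRange (fun n : ℕ => (n : ZMod 2)) (by simp)

def Fq (q : ℚˣ) : Tgt :=
  Finsupp.single (Sum.inl ()) (sgn2 q) +
    Finsupp.embDomain (Function.Embedding.inr) ((vq q).subtypeDomain Nat.Prime)

lemma Fq_inl (q : ℚˣ) : Fq q (Sum.inl ()) = sgn2 q := by
  rw [Fq, Finsupp.add_apply, Finsupp.single_eq_same,
    Finsupp.embDomain_notin_range _ _ _ (by simp), add_zero]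

lemma Fq_inr (q : ℚˣ) (p : {p : ℕ // p.Prime}) :
    Fq q (Sum.inr p) = (((Nq q).factorization (p : ℕ) : ℕ) : ZMod 2) := by
  rw [Fq, Finsupp.add_apply, Finsupp.single_eq_of_ne (by simp)]
  have h : (Sum.inr p : Unit ⊕ {p : ℕ // p.Prime}) = Function.Embedding.inr p := rfl
  rw [h, Finsupp.embDomain_apply_self, Finsupp.subtypeDomain_apply, zero_add, vq,
    Finsupp.mapRange_apply]

lemma Fq_mul (q r : ℚˣ) : Fq (q * r) = Fq q + Fq r := by
  ext a
  rcases a with ⟨⟩ | p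
  · rw [Finsupp.add_apply, Fq_inl, Fq_inl, Fq_inl, sgn2_mul]
  · haveI : Fact (p : ℕ).Prime := ⟨p.2⟩
    rw [Finsupp.add_apply, Fq_inr, Fq_inr, Fq_inr, fact_key _ p.2, fact_key _ p.2,
      fact_key _ p.2, Units.val_mul, padicValRat.mul (Units.ne_zero q) (Units.ne_zero r)]
    push_cast
    ring

lemma Fq_one : Fq 1 = 0 := by
  have h := Fq_mul 1 1
  rw [mul_one] at h
  exact (add_eq_left.mp h.symm)

def FQ : ℚˣ →* Multiplicative Tgt where
  toFun q := Multiplicative.ofAdd (Fq q)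
  map_one' := by
    show Multiplicative.ofAdd (Fq 1) = 1
    rw [Fq_one]; rfl
  map_mul' q r := by
    show Multiplicative.ofAdd (Fq (q * r)) = Multiplicative.ofAdd (Fq q + Fq r)
    rw [Fq_mul]
lemma FQ_apply (q : ℚˣ) : FQ q = Multiplicative.ofAdd (Fq q) := rfl

lemma ker_FQ : FQ.ker = (powMonoidHom 2 : ℚˣ →* ℚˣ).range := by
  ext q
  simp only [MonoidHom.mem_ker, MonoidHom.mem_range, powMonoidHom_apply]
  constructor
  · intro h
    have h0 : Fq q = 0 := by rwa [FQ_apply, ofAdd_eq_one] at h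
    have hpos : (0 : ℚ) < (q : ℚ) := by
      have h1 : sgn2 q = 0 := by rw [← Fq_inl q, h0]; rfl
      rcases (Units.ne_zero q).lt_or_gt with h2 | h2
      · exact absurd h1 (by rw [sgn2, if_pos h2]; exact one_ne_zero)
      · exact h2
    have heven : ∀ p : ℕ, Even ((Nq q).factorization p) := by
      intro p
      by_cases hp : p.Prime
      · have h2 : (((Nq q).factorization p : ℕ) : ZMod 2) = 0 := by
          rw [← Fq_inr q ⟨p, hp⟩, h0]; rfl
        rw [ZMod.natCast_eq_zero_iff] at h2
        exact even_iff_two_dvd.2 h2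
      · rw [Nat.factorization_eq_zero_of_not_prime _ hp]; exact Even.zero
    set m := Nat.floorRoot 2 (Nq q) with hm
    have hm0 : m ≠ 0 := by
      intro hz
      rcases Nat.floorRoot_eq_zero.mp hz with h' | h'
      · exact two_ne_zero h'
      · exact Nq_ne_zero q h'
    have hmsq : m ^ 2 = Nq q := by
      have hfm : (m ^ 2).factorization = (Nq q).factorization := by
        ext p
        rw [Nat.factorization_pow, Finsupp.smul_apply, hm, Nat.factorization_floorRoot,
          Finsupp.floorDiv_apply, Nat.floorDiv_eq_div, smul_eq_mul,
          Nat.mul_div_cancel' ((heven p).two_dvd)]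
      exact Nat.factorization_inj (Set.mem_setOf.2 (pow_ne_zero 2 hm0))
        (Set.mem_setOf.2 (Nq_ne_zero q)) hfm
    have hden : (((q : ℚ).den : ℕ) : ℚ) ≠ 0 := Nat.cast_ne_zero.2 (q : ℚ).den_nz
    have hmQ : ((m : ℕ) : ℚ) ≠ 0 := Nat.cast_ne_zero.2 hm0
    have hnum : (((q : ℚ).num.natAbs : ℕ) : ℚ) = (((q : ℚ).num : ℤ) : ℚ) := by
      rw [Nat.cast_natAbs, abs_of_nonneg (Rat.num_pos.2 hpos).le]
    have hc : (((m : ℕ) : ℚ) / (((q : ℚ).den : ℕ) : ℚ)) ^ 2 = (q : ℚ) := by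
      rw [div_pow, ← Nat.cast_pow, hmsq, Nq, Nat.cast_mul, hnum, sq,
        mul_div_mul_right _ _ hden]
      exact Rat.num_div_den _
    refine ⟨Units.mk0 _ (div_ne_zero hmQ hden), Units.ext ?_⟩
    rw [Units.val_pow_eq_pow_val, Units.val_mk0]
    exact hc
  · rintro ⟨v, rfl⟩
    have hz : Fq (v ^ 2) = 0 := by
      rw [sq, Fq_mul]
      ext a
      rw [Finsupp.add_apply, ← two_mul, Finsupp.coe_zero, Pi.zero_apply,
        show (2 : ZMod 2) = 0 by decide, zero_mul]
    rw [FQ_apply, hz]; rfl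
lemma Fq_neg_one : Fq (-1) = Finsupp.single (Sum.inl ()) 1 := by
  have hval : ((-1 : ℚˣ) : ℚ) = -1 := by simp
  ext a
  rcases a with ⟨⟩ | p
  · rw [Fq_inl, Finsupp.single_eq_same, sgn2, if_pos (by rw [hval]; norm_num)]
  · rw [Fq_inr, Finsupp.single_eq_of_ne (by simp)]
    have hN : Nq (-1) = 1 := by rw [Nq, hval]; norm_num
    rw [hN, Nat.factorization_one]
    simp

lemma Fq_prime (p : ℕ) (hp : p.Prime) :
    Fq (Units.mk0 ((p : ℕ) : ℚ) (Nat.cast_ne_zero.2 hp.ne_zero)) =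
      Finsupp.single (Sum.inr ⟨p, hp⟩) 1 := by
  have hval : ((Units.mk0 ((p : ℕ) : ℚ) (Nat.cast_ne_zero.2 hp.ne_zero) : ℚˣ) : ℚ)
      = ((p : ℕ) : ℚ) := rfl
  ext a
  rcases a with ⟨⟩ | r
  · rw [Fq_inl, Finsupp.single_eq_of_ne (by simp), sgn2,
      if_neg (by rw [hval]; exact not_lt.2 (by positivity))]
  · rw [Fq_inr]
    have hN : Nq (Units.mk0 ((p : ℕ) : ℚ) (Nat.cast_ne_zero.2 hp.ne_zero)) = p := by
      rw [Nq, hval]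
      simp
    rw [hN, hp.factorization]
    by_cases hr : (r : ℕ) = p
    · have hre : r = ⟨p, hp⟩ := Subtype.ext hr
      rw [hre, Finsupp.single_eq_same, Finsupp.single_eq_same, Nat.cast_one]
    · have h2 : (Sum.inr ⟨p, hp⟩ : Unit ⊕ {p : ℕ // p.Prime}) ≠ Sum.inr r := by
        intro h
        apply hr
        injection h with h'
        exact (congrArg Subtype.val h').symm
      rw [Finsupp.single_eq_of_ne' (Ne.symm hr), Finsupp.single_eq_of_ne' h2, Nat.cast_zero]

lemma FQ_surj : Function.Surjective FQ := by
  intro g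
  suffices h : ∃ q : ℚˣ, Fq q = g.toAdd by
    obtain ⟨q, hq⟩ := h
    exact ⟨q, by rw [FQ_apply, hq]; rfl⟩
  induction g.toAdd using Finsupp.induction with
  | zero => exact ⟨1, Fq_one⟩
  | single_add a b f haf hb ih =>
    obtain ⟨q', hq'⟩ := ih
    have hb1 : b = 1 := by
      have : ∀ c : ZMod 2, c ≠ 0 → c = 1 := by decide
      exact this b hb
    obtain ⟨q₀, hq₀⟩ : ∃ q₀ : ℚˣ, Fq q₀ = Finsupp.single a b := by
      rcases a with ⟨⟩ | p
      · exact ⟨-1, by rw [Fq_neg_one, hb1]⟩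
      · exact ⟨Units.mk0 ((p.1 : ℕ) : ℚ) (Nat.cast_ne_zero.2 p.2.ne_zero),
          by rw [Fq_prime p.1 p.2, hb1]⟩
    exact ⟨q₀ * q', by rw [Fq_mul, hq₀, hq']⟩

def part5equiv : (ℚˣ ⧸ (powMonoidHom 2 : ℚˣ →* ℚˣ).range) ≃* Multiplicative Tgt :=
  (QuotientGroup.quotientMulEquivOfEq ker_FQ.symm).trans
    (QuotientGroup.quotientKerEquivOfSurjective FQ FQ_surj)
/-- (for `Δ = t+2+t⁻¹`: `D₁ ≅ ℚ`, the image of `φ₁` is the squares,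
and the cokernel is `ℚ^×/(ℚ^×)²`, an infinite group, isomorphic to a direct sum of
copies of `ℤ/2ℤ` indexed by `{-1}` together with the primes). -/
theorem stmt_4 :
    Function.Bijective evD1 ∧
    (∀ d : (Dn Δs4 1)ˣ,
      d ∈ normSub Δ4 Δs4 hθ4 hsym4 1 ↔ ∃ q : ℚ, q ≠ 0 ∧ evD1 (d : Dn Δs4 1) = q ^ 2) ∧
    Nonempty (((Dn Δs4 1)ˣ ⧸ normSub Δ4 Δs4 hθ4 hsym4 1) ≃*
      (ℚˣ ⧸ (powMonoidHom 2 : ℚˣ →* ℚˣ).range)) ∧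
    Infinite ((Dn Δs4 1)ˣ ⧸ normSub Δ4 Δs4 hθ4 hsym4 1) ∧
    Nonempty ((ℚˣ ⧸ (powMonoidHom 2 : ℚˣ →* ℚˣ).range) ≃*
      Multiplicative ((Unit ⊕ {p : ℕ // p.Prime}) →₀ ZMod 2)) := by
  refine ⟨evD1_bij, part2, ⟨part3equiv⟩, ?_, ⟨part5equiv⟩⟩
  haveI : Infinite {p : ℕ // p.Prime} := Nat.infinite_setOf_prime.to_subtype
  exact Infinite.of_injective _ ((part3equiv.trans part5equiv).symm.injective)
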